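/- If two parametrizations (α, β, f) and (α', β, f') with the same slope β ≠ 0 induce the same case density f₁ and the same control density f₀, and additionally f = f', then α = α' (given the support of f contains points where βᵀx takes at least two values, or even one value suffices by strict monotonicity of φ and the normalization). -/

import Mathlib

open Real Matrix MeasureTheory

/-- The logistic function φ(t) = eᵗ/(1+eᵗ). -/
noncomputable def phi (t : ℝ) : ℝ := Real.exp t / (1 + Real.exp t)

/-- If two parametrizations with the same slope β ≠ 0 and the same covariate
density f induce the same case density (hence the same control density), then
the intercepts coincide. -/
theorem intercept_identifiable_same_density {d : ℕ}
    (α α' : ℝ) (β : Fin d → ℝ) (hβ : β ≠ 0)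
    (f : (Fin d → ℝ) → ℝ) (hf_pos : ∀ x, 0 < f x)
    (cα cα' : ℝ)
    (hcα : cα = ∫ x, phi (α + β ⬝ᵥ x) * f x)
    (hcα' : cα' = ∫ x, phi (α' + β ⬝ᵥ x) * f x)
    (hcα01 : 0 < cα ∧ cα < 1) (hcα'01 : 0 < cα' ∧ cα' < 1)
    (heq : ∀ x, phi (α + β ⬝ᵥ x) * f x / cα = phi (α' + β ⬝ᵥ x) * f x / cα') :
    α = α' := by
  obtain ⟨hc1, hc2⟩ := hcα01
  obtain ⟨hc1', hc2'⟩ := hcα'01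
  have hββ : β ⬝ᵥ β ≠ 0 := fun h => hβ (dotProduct_self_eq_zero.mp h)
  have key : ∀ t : ℝ, phi (α + t) * cα' = phi (α' + t) * cα := by
    intro t
    have hx := heq ((t / (β ⬝ᵥ β)) • β)
    have hdot : β ⬝ᵥ ((t / (β ⬝ᵥ β)) • β) = t := by
      rw [dotProduct_smul, smul_eq_mul]
      field_simp
    rw [hdot] at hx
    have hfx := (hf_pos ((t / (β ⬝ᵥ β)) • β)).ne'
    field_simp at hx
    nlinarith [hf_pos ((t / (β ⬝ᵥ β)) • β), hx]
  have e1 := key 0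
  have e2 := key 1
  set A := Real.exp α with hA
  set B := Real.exp α' with hB
  have hApos : 0 < A := Real.exp_pos α
  have hBpos : 0 < B := Real.exp_pos α'
  have hE : (1 : ℝ) < Real.exp 1 := by
    have := Real.exp_one_gt_d9; linarith
  have hEpos : 0 < Real.exp 1 := by linarith
  have h1A : 0 < 1 + A := by linarith
  have h1B : 0 < 1 + B := by linarith
  have h1AE : 0 < 1 + A * Real.exp 1 := by positivity
  have h1BE : 0 < 1 + B * Real.exp 1 := by positivity
  simp only [phi, add_zero, Real.exp_add, ← hA, ← hB] at e1 e2
  rw [div_mul_eq_mul_div, div_mul_eq_mul_div, div_eq_div_iff h1A.ne' h1B.ne'] at e1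
  rw [div_mul_eq_mul_div, div_mul_eq_mul_div, div_eq_div_iff h1AE.ne' h1BE.ne'] at e2
  -- e1 : A * cα' * (1 + B) = B * cα * (1 + A)
  -- e2 : A * e * cα' * (1 + B * e) = B * e * cα * (1 + A * e)
  have hcc : cα = cα' := by
    have h0 : A * B * Real.exp 1 * (Real.exp 1 - 1) * (cα' - cα) = 0 := by
      linear_combination e2 - Real.exp 1 * e1
    have hpos : 0 < A * B * Real.exp 1 * (Real.exp 1 - 1) :=
      mul_pos (mul_pos (mul_pos hApos hBpos) hEpos) (by linarith)
    have := mul_eq_zero.mp h0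
    rcases this with h | h
    · exact absurd h hpos.ne'
    · linarith
  have hAB : A = B := by
    rw [hcc] at e1
    have h0 : (A - B) * cα' = 0 := by linear_combination e1
    rcases mul_eq_zero.mp h0 with h | h
    · linarith
    · exact absurd h hc1'.ne'
  exact Real.exp_injective (by rw [← hA, ← hB, hAB])
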